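/- Let (X, d) be a metric space, let P ⊆ X be finite and nonempty, let Q ⊆ P be nonempty, let r ≥ 0, and let ε ∈ (0,1]. Suppose that every point p ∈ P satisfies d(p, Q) ≤ r (i.e., Q covers P at radius r). Let q ∈ X and let a ∈ Q be a point with d(q, a) ≤ (1 + ε/4)·d(q, Q) and r < (ε/8)·d(q, a). Then d(q, a) ≤ (1 + ε)·d(q, P). -/
import Mathlib

/-- **Early-stopping criterion.** In a metric space, let `P` be finite nonempty,
`Q ⊆ P` nonempty, `r ≥ 0`, `ε ∈ (0,1]`, and suppose every point of `P` is within
distance `r` of `Q`. If `a ∈ Q` satisfies `d(q,a) ≤ (1 + ε/4) d(q,Q)` and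
`r < (ε/8) d(q,a)`, then `d(q,a) ≤ (1+ε) d(q,P)`. -/
theorem stmt_11 {X : Type*} [MetricSpace X] (P Q : Set X) (hPfin : P.Finite)
    (hPne : P.Nonempty) (hQP : Q ⊆ P) (hQne : Q.Nonempty)
    (r : ℝ) (hr : 0 ≤ r) (ε : ℝ) (hε : ε ∈ Set.Ioc (0 : ℝ) 1)
    (hcover : ∀ x ∈ P, Metric.infDist x Q ≤ r)
    (q a : X) (ha : a ∈ Q)
    (hann : dist q a ≤ (1 + ε / 4) * Metric.infDist q Q)
    (hfar : r < ε / 8 * dist q a) :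
    dist q a ≤ (1 + ε) * Metric.infDist q P := by
  obtain ⟨hε0, hε1⟩ := hε
  obtain ⟨p, hpP, hpd⟩ :=
    (hPfin.isCompact).exists_infDist_eq_dist hPne q
  have h1 : Metric.infDist q Q ≤ Metric.infDist p Q + dist q p :=
    Metric.infDist_le_infDist_add_dist
  have h2 : Metric.infDist p Q ≤ r := hcover p hpP
  have h3 : Metric.infDist q Q ≤ Metric.infDist q P + r := by
    rw [hpd]; linarith
  have h4 : 0 ≤ Metric.infDist q P := Metric.infDist_nonneg
  have h5 : 0 ≤ dist q a := dist_nonneg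
  nlinarith [mul_nonneg h4 hε0.le, mul_nonneg hε0.le h5]
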